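/- Let μ be a finite measure, H a real Hilbert space, T : H → L²(μ) a compact continuous linear map, Y a real normed vector space, F : L¹(μ) → Y continuous, and R : L¹(μ) → [0, ∞] sequentially lower semicontinuous with respect to L¹ convergence. Fix ε > 0, α > 0, β > 0, y^δ ∈ Y and φ₀ ∈ H. Then the functional G_{ε,α}(φ) := ‖F(P_ε ∘ (Tφ)) − y^δ‖²_Y + 2βα·R(P_ε ∘ (Tφ)) + α‖φ − φ₀‖²_H attains a global minimizer on H. -/

import Mathlib

open MeasureTheory Filter Topology

noncomputable section

open scoped ENNReal NNReal

/-- The smoothed level set projection `P_ε`. -/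
def Pe (ε t : ℝ) : ℝ := max 0 (min 1 (1 + t / ε))

/-- The level set projection `P` (Heaviside function, `P t = 1` iff `0 ≤ t`). -/
def Pstep (t : ℝ) : ℝ := if 0 ≤ t then 1 else 0

lemma Pe_continuous (ε : ℝ) : Continuous (Pe ε) :=
  continuous_const.max (continuous_const.min (continuous_const.add (continuous_id.div_const ε)))

lemma Pe_bound (ε t : ℝ) : ‖Pe ε t‖ ≤ 1 := by
  unfold Pe
  rw [Real.norm_eq_abs, abs_le]
  refine ⟨by linarith [le_max_left (0:ℝ) (min 1 (1 + t / ε))], ?_⟩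
  exact max_le (by norm_num) (min_le_left _ _)

lemma Pe_lip {ε : ℝ} (hε : 0 < ε) (a b : ℝ) : |Pe ε a - Pe ε b| ≤ ε⁻¹ * |a - b| := by
  unfold Pe
  have h1 : |max 0 (min 1 (1 + a / ε)) - max 0 (min 1 (1 + b / ε))|
      ≤ |min 1 (1 + a / ε) - min 1 (1 + b / ε)| := by
    rw [max_comm 0 (min 1 (1 + a / ε)), max_comm 0 (min 1 (1 + b / ε))]
    exact abs_max_sub_max_le_abs _ _ _
  have h2 : |min 1 (1 + a / ε) - min 1 (1 + b / ε)| ≤ |(1 + a / ε) - (1 + b / ε)| := by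
    have := abs_min_sub_min_le_max 1 (1 + a / ε) 1 (1 + b / ε)
    simpa using this
  have h3 : |(1 + a / ε) - (1 + b / ε)| = ε⁻¹ * |a - b| := by
    rw [show (1 + a / ε) - (1 + b / ε) = ε⁻¹ * (a - b) by field_simp; ring,
      abs_mul, abs_of_pos (inv_pos.mpr hε)]
  exact h1.trans (h2.trans h3.le)


lemma Pstep_measurable : Measurable Pstep :=
  Measurable.ite measurableSet_Ici measurable_const measurable_const

lemma Pstep_bound (t : ℝ) : ‖Pstep t‖ ≤ 1 := by
  unfold Pstep; split <;> simp

variable {X : Type*} [MeasurableSpace X] (μ : Measure X) [IsFiniteMeasure μ]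

/-- Composition `P_ε ∘ f` of the smoothed projection with an `L²` function, as an
element of `L¹` (the measure being finite). -/
def compPe (ε : ℝ) (f : Lp ℝ 2 μ) : Lp ℝ 1 μ :=
  (MemLp.of_bound ((Pe_continuous ε).comp_aestronglyMeasurable (Lp.aestronglyMeasurable f)) 1
    (Eventually.of_forall fun x => Pe_bound ε (f x))).toLp _

/-- Composition `P ∘ f` of the discontinuous projection with an `L²` function, as an
element of `L¹`. -/
def compP (f : Lp ℝ 2 μ) : Lp ℝ 1 μ :=
  (MemLp.of_bound
    (Pstep_measurable.comp_aemeasurable (Lp.aestronglyMeasurable f).aemeasurable).aestronglyMeasurable 1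
    (Eventually.of_forall fun x => Pstep_bound (f x))).toLp _

/-- A pair `(z, φ) ∈ L¹ × L²` is admissible if `z` is the `L¹` limit of `P_{ε_k} ∘ φ_k`
for some positive `ε_k → 0` and some `φ_k → φ` in `L²`. -/
def Admissible (z : Lp ℝ 1 μ) (φ : Lp ℝ 2 μ) : Prop :=
  ∃ (εs : ℕ → ℝ) (φs : ℕ → Lp ℝ 2 μ),
    (∀ k, 0 < εs k) ∧ Tendsto εs atTop (𝓝 0) ∧
    Tendsto φs atTop (𝓝 φ) ∧
    Tendsto (fun k => compPe μ (εs k) (φs k)) atTop (𝓝 z)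

lemma compPe_dist_le {ε : ℝ} (hε : 0 < ε) (f h : Lp ℝ 2 μ) :
    dist (compPe μ ε f) (compPe μ ε h) ≤ ε⁻¹ * (μ Set.univ).toReal ^ (2⁻¹ : ℝ) * dist f h := by
  have hcf : ⇑(compPe μ ε f) =ᵐ[μ] fun x => Pe ε (f x) := MemLp.coeFn_toLp _
  have hch : ⇑(compPe μ ε h) =ᵐ[μ] fun x => Pe ε (h x) := MemLp.coeFn_toLp _
  rw [Lp.dist_def, Lp.dist_def]
  have key : eLpNorm (⇑(compPe μ ε f) - ⇑(compPe μ ε h)) 1 μ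
      ≤ ENNReal.ofReal ε⁻¹ * (eLpNorm (⇑(f - h)) 2 μ * μ Set.univ ^ (2⁻¹ : ℝ)) := by
    have e1 : eLpNorm (⇑(compPe μ ε f) - ⇑(compPe μ ε h)) 1 μ
        = eLpNorm (fun x => Pe ε (f x) - Pe ε (h x)) 1 μ := by
      apply eLpNorm_congr_ae
      filter_upwards [hcf, hch] with x h1 h2
      simp [h1, h2]
    rw [e1]
    have e2 : eLpNorm (fun x => Pe ε (f x) - Pe ε (h x)) 1 μ
        ≤ eLpNorm (ε⁻¹ • (⇑f - ⇑h)) 1 μ := by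
      apply eLpNorm_mono
      intro x
      simp only [Pi.smul_apply, Pi.sub_apply, smul_eq_mul, Real.norm_eq_abs, abs_mul,
        abs_of_pos (inv_pos.mpr hε)]
      exact Pe_lip hε (f x) (h x)
    refine e2.trans ?_
    rw [eLpNorm_const_smul]
    have e3 : eLpNorm (⇑f - ⇑h) 1 μ ≤ eLpNorm (⇑f - ⇑h) 2 μ * μ Set.univ ^ (2⁻¹ : ℝ) := by
      have := eLpNorm_le_eLpNorm_mul_rpow_measure_univ (μ := μ) (p := 1) (q := 2)
        (f := ⇑f - ⇑h) one_le_two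
        ((Lp.aestronglyMeasurable f).sub (Lp.aestronglyMeasurable h))
      convert this using 2
      norm_num
    have e4 : eLpNorm (⇑f - ⇑h) 2 μ = eLpNorm (⇑(f - h)) 2 μ :=
      (eLpNorm_congr_ae (Lp.coeFn_sub f h)).symm
    calc (‖ε⁻¹‖₊ : ℝ≥0∞) * eLpNorm (⇑f - ⇑h) 1 μ
        ≤ (‖ε⁻¹‖₊ : ℝ≥0∞) * (eLpNorm (⇑f - ⇑h) 2 μ * μ Set.univ ^ (2⁻¹ : ℝ)) := by gcongr
      _ = ENNReal.ofReal ε⁻¹ * (eLpNorm (⇑(f - h)) 2 μ * μ Set.univ ^ (2⁻¹ : ℝ)) := by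
          rw [e4, ENNReal.ofReal, Real.toNNReal_eq_nnnorm_of_nonneg (inv_pos.mpr hε).le]
  calc (eLpNorm (⇑(compPe μ ε f) - ⇑(compPe μ ε h)) 1 μ).toReal
      ≤ (ENNReal.ofReal ε⁻¹ * (eLpNorm (⇑(f - h)) 2 μ * μ Set.univ ^ (2⁻¹ : ℝ))).toReal := by
        apply ENNReal.toReal_mono _ key
        exact ENNReal.mul_ne_top ENNReal.ofReal_ne_top
          (ENNReal.mul_ne_top (Lp.eLpNorm_ne_top _)
            (ENNReal.rpow_ne_top_of_nonneg (by norm_num) (measure_ne_top μ _)))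
    _ = ε⁻¹ * (μ Set.univ).toReal ^ (2⁻¹ : ℝ) * (eLpNorm (⇑(f - h)) 2 μ).toReal := by
        rw [ENNReal.toReal_mul, ENNReal.toReal_mul, ENNReal.toReal_ofReal (inv_pos.mpr hε).le,
          ENNReal.toReal_rpow]
        ring
    _ = ε⁻¹ * (μ Set.univ).toReal ^ (2⁻¹ : ℝ) * (eLpNorm (⇑f - ⇑h) 2 μ).toReal := by
        rw [eLpNorm_congr_ae (Lp.coeFn_sub f h)]

lemma compPe_tendsto {ε : ℝ} (hε : 0 < ε) {fs : ℕ → Lp ℝ 2 μ} {f : Lp ℝ 2 μ}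
    (h : Tendsto fs atTop (𝓝 f)) :
    Tendsto (fun n => compPe μ ε (fs n)) atTop (𝓝 (compPe μ ε f)) := by
  rw [tendsto_iff_dist_tendsto_zero]
  have hb : Tendsto (fun n => ε⁻¹ * (μ Set.univ).toReal ^ (2⁻¹ : ℝ) * dist (fs n) f)
      atTop (𝓝 0) := by
    have := (tendsto_iff_dist_tendsto_zero.mp h).const_mul (ε⁻¹ * (μ Set.univ).toReal ^ (2⁻¹ : ℝ))
    simpa using this
  exact squeeze_zero (fun n => dist_nonneg) (fun n => compPe_dist_le μ hε _ _) hb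

lemma exists_weak_limit {H E : Type*} [NormedAddCommGroup H] [InnerProductSpace ℝ H]
    [CompleteSpace H] [NormedAddCommGroup E] [NormedSpace ℝ E]
    (T : H →L[ℝ] E) (φ₀ : H) (g : E) (c : ℝ) (φs : ℕ → H)
    (hTg : Tendsto (fun n => T (φs n)) atTop (𝓝 g))
    (hc : Tendsto (fun n => ‖φs n - φ₀‖) atTop (𝓝 c)) :
    ∃ φ : H, T φ = g ∧ ‖φ - φ₀‖ ≤ c := by
  set δ : ℕ → ℝ := fun k => (k + 1 : ℝ)⁻¹ with hδ
  have hδpos : ∀ k, 0 < δ k := fun k => by positivity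
  have hδanti : ∀ {k l : ℕ}, k ≤ l → δ l ≤ δ k := by
    intro k l hkl
    apply inv_anti₀ (by positivity)
    have : (k:ℝ) ≤ l := Nat.cast_le.mpr hkl
    linarith
  have hδ0 : Tendsto δ atTop (𝓝 0) := tendsto_one_div_add_atTop_nhds_zero_nat.congr (by
    intro n; simp [hδ, one_div])
  set S : ℕ → Set H := fun k => {φ | ‖T φ - g‖ ≤ δ k ∧ ‖φ - φ₀‖ ≤ c + δ k} with hS
  -- nonemptiness
  have hSne : ∀ k, (S k).Nonempty := by
    intro k
    have h1 : ∀ᶠ n in atTop, ‖T (φs n) - g‖ ≤ δ k := by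
      exact (tendsto_iff_norm_sub_tendsto_zero.mp hTg).eventually_le_const (hδpos k)
    have h2 : ∀ᶠ n in atTop, ‖φs n - φ₀‖ ≤ c + δ k :=
      hc.eventually_le_const (by linarith [hδpos k] : c < c + δ k)
    obtain ⟨n, hn1, hn2⟩ := (h1.and h2).exists
    exact ⟨φs n, hn1, hn2⟩
  have hSanti : ∀ {k l : ℕ}, k ≤ l → S l ⊆ S k := by
    intro k l hkl φ hφ
    exact ⟨hφ.1.trans (hδanti hkl), hφ.2.trans (by linarith [hδanti hkl])⟩
  -- convexity (midpoints)
  have hSmid : ∀ k (φ ψ : H), φ ∈ S k → ψ ∈ S k → (2:ℝ)⁻¹ • (φ + ψ) ∈ S k := by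
    intro k φ ψ hφ hψ
    constructor
    · have e : T ((2:ℝ)⁻¹ • (φ + ψ)) - g
          = (2:ℝ)⁻¹ • ((T φ - g) + (T ψ - g)) := by
        rw [T.map_smul, map_add]; module
      rw [e, norm_smul]
      simp only [norm_inv, Real.norm_ofNat]
      calc 2⁻¹ * ‖(T φ - g) + (T ψ - g)‖ ≤ 2⁻¹ * (‖T φ - g‖ + ‖T ψ - g‖) := by
            gcongr; exact norm_add_le _ _
        _ ≤ δ k := by nlinarith [hφ.1, hψ.1]
    · have e : (2:ℝ)⁻¹ • (φ + ψ) - φ₀ = (2:ℝ)⁻¹ • ((φ - φ₀) + (ψ - φ₀)) := by module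
      rw [e, norm_smul]
      simp only [norm_inv, Real.norm_ofNat]
      calc 2⁻¹ * ‖(φ - φ₀) + (ψ - φ₀)‖ ≤ 2⁻¹ * (‖φ - φ₀‖ + ‖ψ - φ₀‖) := by
            gcongr; exact norm_add_le _ _
        _ ≤ c + δ k := by nlinarith [hφ.2, hψ.2]
  -- distances
  set d : ℕ → ℝ := fun k => sInf ((fun φ => ‖φ - φ₀‖) '' S k) with hd
  have hbdd : ∀ k, BddBelow ((fun φ => ‖φ - φ₀‖) '' S k) := by
    intro k
    exact ⟨0, fun x ⟨φ, _, hx⟩ => hx ▸ norm_nonneg _⟩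
  have hdne : ∀ k, ((fun φ => ‖φ - φ₀‖) '' S k).Nonempty := fun k => (hSne k).image _
  have hdnonneg : ∀ k, 0 ≤ d k := by
    intro k
    exact le_csInf (hdne k) (fun x ⟨φ, _, hx⟩ => hx ▸ norm_nonneg _)
  have hdlow : ∀ k φ, φ ∈ S k → d k ≤ ‖φ - φ₀‖ := by
    intro k φ hφ
    exact csInf_le (hbdd k) ⟨φ, hφ, rfl⟩
  have hdmono : Monotone d := by
    intro k l hkl
    exact le_csInf (hdne l) (fun x ⟨φ, hφ, hx⟩ => hx ▸ hdlow k φ (hSanti hkl hφ))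
  have hdle : ∀ k, d k ≤ c + δ k := by
    intro k
    obtain ⟨φ, hφ⟩ := hSne k
    exact (hdlow k φ hφ).trans hφ.2
  have hdlec : ∀ k, d k ≤ c := by
    intro k
    have h1 : ∀ᶠ l in atTop, d k ≤ c + δ l :=
      eventually_atTop.mpr ⟨k, fun l hl => (hdmono hl).trans (hdle l)⟩
    have h2 : Tendsto (fun l => c + δ l) atTop (𝓝 c) := by
      simpa using tendsto_const_nhds.add hδ0
    exact ge_of_tendsto h2 h1
  -- the sup D
  have hbddA : BddAbove (Set.range d) := ⟨c, fun x ⟨k, hk⟩ => hk ▸ hdlec k⟩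
  set D : ℝ := ⨆ k, d k with hD
  have hdD : Tendsto d atTop (𝓝 D) := tendsto_atTop_ciSup hdmono hbddA
  have hDlec : D ≤ c := ciSup_le hdlec
  have hdleD : ∀ k, d k ≤ D := fun k => le_ciSup hbddA k
  -- choose approximate minimizers
  have hq : ∀ k, ∃ φ ∈ S k, ‖φ - φ₀‖ < d k + δ k := by
    intro k
    obtain ⟨x, ⟨φ, hφ, rfl⟩, hx⟩ := Real.lt_sInf_add_pos (hdne k) (hδpos k)
    exact ⟨φ, hφ, hx⟩
  choose q hqS hqlt using hq
  -- Cauchy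
  set b : ℕ → ℝ := fun N => Real.sqrt (4 * (D + δ N) ^ 2 - 4 * d N ^ 2) with hb
  have hcauchy : CauchySeq q := by
    apply cauchySeq_of_le_tendsto_0 b
    · intro n m N hn hm
      have hqn := hSanti hn (hqS n)
      have hqm := hSanti hm (hqS m)
      have hmid := hSmid N _ _ hqn hqm
      have hpar := parallelogram_law_with_norm ℝ (q n - φ₀) (q m - φ₀)
      have e1 : q n - φ₀ - (q m - φ₀) = q n - q m := by abel
      have e2 : q n - φ₀ + (q m - φ₀) = (2:ℝ) • ((2:ℝ)⁻¹ • (q n + q m) - φ₀) := by module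
      rw [e1, e2, norm_smul] at hpar
      simp only [Real.norm_ofNat] at hpar
      have hlow : d N ≤ ‖(2:ℝ)⁻¹ • (q n + q m) - φ₀‖ := hdlow N _ hmid
      have hbn : ‖q n - φ₀‖ < d n + δ n := hqlt n
      have hbm : ‖q m - φ₀‖ < d m + δ m := hqlt m
      have hup_n : ‖q n - φ₀‖ ≤ D + δ N :=
        hbn.le.trans (by linarith [hdleD n, hδanti hn])
      have hup_m : ‖q m - φ₀‖ ≤ D + δ N :=
        hbm.le.trans (by linarith [hdleD m, hδanti hm])
      have hsq : ‖q n - q m‖ ^ 2 ≤ 4 * (D + δ N) ^ 2 - 4 * d N ^ 2 := by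
        nlinarith [norm_nonneg (q n - φ₀), norm_nonneg (q m - φ₀), norm_nonneg (q n - q m),
          hdnonneg N, norm_nonneg ((2:ℝ)⁻¹ • (q n + q m) - φ₀)]
      rw [dist_eq_norm]
      rw [hb]
      have := Real.sqrt_le_sqrt hsq
      rwa [Real.sqrt_sq (norm_nonneg _)] at this
    · have h1 : Tendsto (fun N => 4 * (D + δ N) ^ 2 - 4 * d N ^ 2) atTop (𝓝 0) := by
        have h2 : Tendsto (fun N => D + δ N) atTop (𝓝 (D + 0)) := tendsto_const_nhds.add hδ0
        rw [add_zero] at h2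
        have h3 := ((h2.pow 2).const_mul 4).sub ((hdD.pow 2).const_mul 4)
        simpa using h3
      have := h1.sqrt
      simpa [hb, Real.sqrt_zero] using this
  obtain ⟨φ, hφ⟩ := cauchySeq_tendsto_of_complete hcauchy
  refine ⟨φ, ?_, ?_⟩
  · have h1 : Tendsto (fun k => T (q k)) atTop (𝓝 (T φ)) := (T.continuous.tendsto φ).comp hφ
    have h2 : Tendsto (fun k => T (q k)) atTop (𝓝 g) := by
      rw [tendsto_iff_norm_sub_tendsto_zero]
      exact squeeze_zero (fun k => norm_nonneg _) (fun k => (hqS k).1) hδ0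
    exact tendsto_nhds_unique h1 h2
  · have h1 : Tendsto (fun k => ‖q k - φ₀‖) atTop (𝓝 ‖φ - φ₀‖) :=
      ((continuous_norm.comp (continuous_id.sub continuous_const)).tendsto φ).comp hφ
    have h2 : Tendsto (fun k => d k + δ k) atTop (𝓝 D) := by
      simpa using hdD.add hδ0
    have h3 : ∀ k, ‖q k - φ₀‖ ≤ d k + δ k := fun k => (hqlt k).le
    exact (le_of_tendsto_of_tendsto h1 h2 (Eventually.of_forall h3)).trans hDlec

set_option synthInstance.maxHeartbeats 1000000 in
/-- Lemma 4.1 (abstract form): for a finite measure `μ`, a compact continuous linear map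
`T : H → L²(μ)` from a real Hilbert space, a continuous map `F : L¹(μ) → Y`, and a
sequentially lower semicontinuous functional `R : L¹(μ) → [0, ∞]` (e.g. the BV seminorm of
the projection), the stabilized functional
`G_{ε,α}(φ) = ‖F(P_ε ∘ (Tφ)) − y^δ‖² + 2βα·R(P_ε ∘ (Tφ)) + α‖φ − φ₀‖²`
attains a global minimizer on `H` for all `ε, α, β > 0`. -/
theorem stabilized_functional_attains_minimizer
    {X : Type*} [MeasurableSpace X] (μ : Measure X) [IsFiniteMeasure μ]
    {H : Type*} [NormedAddCommGroup H] [InnerProductSpace ℝ H] [CompleteSpace H]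
    {Y : Type*} [NormedAddCommGroup Y] [NormedSpace ℝ Y]
    (T : H →L[ℝ] Lp ℝ 2 μ) (hT : IsCompactOperator T)
    (F : Lp ℝ 1 μ → Y) (hF : Continuous F)
    (R : Lp ℝ 1 μ → ENNReal)
    (hR : ∀ (fs : ℕ → Lp ℝ 1 μ) (f : Lp ℝ 1 μ),
      Tendsto fs atTop (𝓝 f) → R f ≤ Filter.liminf (fun n => R (fs n)) atTop)
    (ε α β : ℝ) (hε : 0 < ε) (hα : 0 < α) (hβ : 0 < β) (yδ : Y) (φ₀ : H) :
    ∃ φstar : H, ∀ φ : H,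
      ENNReal.ofReal (‖F (compPe μ ε (T φstar)) - yδ‖ ^ 2) +
        ENNReal.ofReal (2 * β * α) * R (compPe μ ε (T φstar)) +
        ENNReal.ofReal (α * ‖φstar - φ₀‖ ^ 2) ≤
      ENNReal.ofReal (‖F (compPe μ ε (T φ)) - yδ‖ ^ 2) +
        ENNReal.ofReal (2 * β * α) * R (compPe μ ε (T φ)) +
        ENNReal.ofReal (α * ‖φ - φ₀‖ ^ 2) := by
  set C : ℝ≥0∞ := ENNReal.ofReal (2 * β * α) with hC
  set G : H → ℝ≥0∞ := fun φ =>
    ENNReal.ofReal (‖F (compPe μ ε (T φ)) - yδ‖ ^ 2) + C * R (compPe μ ε (T φ)) +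
      ENNReal.ofReal (α * ‖φ - φ₀‖ ^ 2) with hG
  suffices hmain : ∃ φstar : H, ∀ φ : H, G φstar ≤ G φ by exact hmain
  set m : ℝ≥0∞ := ⨅ φ, G φ with hm
  by_cases hmt : m = ⊤
  · refine ⟨φ₀, fun φ => ?_⟩
    have := iInf_eq_top.mp hmt φ
    rw [this]; exact le_top
  -- minimizing sequence
  have hsel : ∀ n : ℕ, ∃ φ, G φ < m + (((n : ℝ≥0∞) + 1))⁻¹ := by
    intro n
    apply iInf_lt_iff.mp
    exact ENNReal.lt_add_right hmt (by simp)
  choose φs hφs using hsel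
  have hml : ∀ n, m ≤ G (φs n) := fun n => iInf_le G (φs n)
  have hGlim : Tendsto (fun n => G (φs n)) atTop (𝓝 m) := by
    have h0 : Tendsto (fun n : ℕ => ((n : ℝ≥0∞) + 1)⁻¹) atTop (𝓝 0) := by
      have h := ENNReal.tendsto_inv_nat_nhds_zero.comp (tendsto_add_atTop_nat 1)
      refine h.congr fun n => ?_
      show ((↑(n + 1) : ℝ≥0∞))⁻¹ = ((n : ℝ≥0∞) + 1)⁻¹
      norm_cast
    have hub : Tendsto (fun n : ℕ => m + ((n : ℝ≥0∞) + 1)⁻¹) atTop (𝓝 m) := by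
      simpa using tendsto_const_nhds.add h0
    exact tendsto_of_tendsto_of_tendsto_of_le_of_le tendsto_const_nhds hub hml
      (fun n => (hφs n).le)
  -- boundedness of the minimizing sequence
  have hm1 : m + 1 ≠ ⊤ := ENNReal.add_ne_top.mpr ⟨hmt, ENNReal.one_ne_top⟩
  set B : ℝ := Real.sqrt ((m + 1).toReal / α) with hB
  have hball : ∀ n, φs n ∈ Metric.closedBall φ₀ B := by
    intro n
    have h1 : ENNReal.ofReal (α * ‖φs n - φ₀‖ ^ 2) ≤ m + 1 := by
      have hle : ENNReal.ofReal (α * ‖φs n - φ₀‖ ^ 2) ≤ G (φs n) := le_add_self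
      refine hle.trans ((hφs n).le.trans ?_)
      gcongr
      exact ENNReal.inv_le_one.mpr (by simp)
    have h2 : α * ‖φs n - φ₀‖ ^ 2 ≤ (m + 1).toReal :=
      (ENNReal.ofReal_le_iff_le_toReal hm1).mp h1
    have h3 : ‖φs n - φ₀‖ ^ 2 ≤ (m + 1).toReal / α := (le_div_iff₀ hα).mpr (by linarith)
    have h4 : ‖φs n - φ₀‖ ≤ B := by
      have := Real.sqrt_le_sqrt h3
      rwa [Real.sqrt_sq (norm_nonneg _)] at this
    simpa [Metric.mem_closedBall, dist_eq_norm] using h4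
  -- compactness of T
  obtain ⟨K, hK, hTK⟩ := hT.image_subset_compact_of_bounded
    (Metric.isBounded_closedBall (x := φ₀) (r := B))
  have hmem : ∀ n, T (φs n) ∈ K := fun n => hTK ⟨φs n, hball n, rfl⟩
  obtain ⟨g, hgK, σ, hσ, hgtend⟩ := hK.tendsto_subseq hmem
  -- Bolzano-Weierstrass for the norms
  have hIcc : ∀ k, ‖φs (σ k) - φ₀‖ ∈ Set.Icc (0:ℝ) B := fun k =>
    ⟨norm_nonneg _, by simpa [dist_eq_norm] using hball (σ k)⟩
  obtain ⟨c, hcmem, τ, hτ, hctend⟩ := tendsto_subseq_of_bounded isCompact_Icc.isBounded hIcc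
  have hc0 : 0 ≤ c := by
    rw [isClosed_Icc.closure_eq] at hcmem
    exact hcmem.1
  set ψ : ℕ → H := fun k => φs (σ (τ k)) with hψ
  have hTψ : Tendsto (fun k => T (ψ k)) atTop (𝓝 g) := hgtend.comp hτ.tendsto_atTop
  have hψnorm : Tendsto (fun k => ‖ψ k - φ₀‖) atTop (𝓝 c) := hctend
  obtain ⟨φstar, hTφ, hφnorm⟩ := exists_weak_limit T φ₀ g c ψ hTψ hψnorm
  refine ⟨φstar, fun φ => ?_⟩
  suffices hGm : G φstar ≤ m by exact hGm.trans (iInf_le G φ)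
  -- convergence pieces
  have hz : Tendsto (fun k => compPe μ ε (T (ψ k))) atTop (𝓝 (compPe μ ε g)) :=
    compPe_tendsto μ hε hTψ
  have hzstar : compPe μ ε (T φstar) = compPe μ ε g := by rw [hTφ]
  set t1 : ℝ := ‖F (compPe μ ε g) - yδ‖ ^ 2 with ht1def
  set w : ℝ := α * c ^ 2 with hwdef
  have ht1 : Tendsto (fun k => ‖F (compPe μ ε (T (ψ k))) - yδ‖ ^ 2) atTop (𝓝 t1) :=
    ((((hF.tendsto _).comp hz).sub tendsto_const_nhds).norm).pow 2
  have hwt : Tendsto (fun k => α * ‖ψ k - φ₀‖ ^ 2) atTop (𝓝 w) := (hψnorm.pow 2).const_mul α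
  have hRliminf : R (compPe μ ε g) ≤ liminf (fun k => R (compPe μ ε (T (ψ k)))) atTop :=
    hR _ _ hz
  have hGψ : Tendsto (fun k => G (ψ k)) atTop (𝓝 m) := hGlim.comp (hσ.comp hτ).tendsto_atTop
  have hmliminf : m = liminf (fun k => G (ψ k)) atTop := hGψ.liminf_eq.symm
  set M : ℝ≥0∞ := liminf (fun k => C * R (compPe μ ε (T (ψ k)))) atTop with hM
  have hCM : C * R (compPe μ ε g) ≤ M := by
    have h1 := ENNReal.le_liminf_mul (f := atTop) (u := fun _ : ℕ => C)
      (v := fun k => R (compPe μ ε (T (ψ k))))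
    rw [liminf_const] at h1
    exact (mul_le_mul_right hRliminf C).trans h1
  have key : ∀ d : ℝ, 0 < d →
      ENNReal.ofReal (t1 - d) + M + ENNReal.ofReal (w - d) ≤ m := by
    intro d hd
    have hh1 : ∀ᶠ k in atTop,
        ENNReal.ofReal (t1 - d) ≤ ENNReal.ofReal (‖F (compPe μ ε (T (ψ k))) - yδ‖ ^ 2) := by
      filter_upwards [ht1.eventually_const_le (show t1 - d < t1 by linarith)] with k hk
      exact ENNReal.ofReal_le_ofReal hk
    have hh2 : ∀ᶠ k in atTop,
        ENNReal.ofReal (w - d) ≤ ENNReal.ofReal (α * ‖ψ k - φ₀‖ ^ 2) := by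
      filter_upwards [hwt.eventually_const_le (show w - d < w by linarith)] with k hk
      exact ENNReal.ofReal_le_ofReal hk
    have hev : ∀ᶠ k in atTop,
        ENNReal.ofReal (t1 - d) + C * R (compPe μ ε (T (ψ k))) + ENNReal.ofReal (w - d)
          ≤ G (ψ k) := by
      filter_upwards [hh1, hh2] with k hk1 hk2
      exact add_le_add (add_le_add hk1 le_rfl) hk2
    have e1 : liminf (fun k =>
        ENNReal.ofReal (t1 - d) + C * R (compPe μ ε (T (ψ k))) + ENNReal.ofReal (w - d))
        atTop = ENNReal.ofReal (t1 - d) + M + ENNReal.ofReal (w - d) := by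
      rw [liminf_add_const atTop
        (fun k => ENNReal.ofReal (t1 - d) + C * R (compPe μ ε (T (ψ k))))
        (ENNReal.ofReal (w - d)) (by isBoundedDefault) (by isBoundedDefault),
        liminf_const_add atTop (fun k => C * R (compPe μ ε (T (ψ k))))
        (ENNReal.ofReal (t1 - d)) (by isBoundedDefault) (by isBoundedDefault)]
    calc ENNReal.ofReal (t1 - d) + M + ENNReal.ofReal (w - d)
        = liminf (fun k =>
            ENNReal.ofReal (t1 - d) + C * R (compPe μ ε (T (ψ k))) + ENNReal.ofReal (w - d))
            atTop := e1.symm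
      _ ≤ liminf (fun k => G (ψ k)) atTop := liminf_le_liminf hev
      _ = m := hmliminf.symm
  have hfinal : ENNReal.ofReal t1 + M + ENNReal.ofReal w ≤ m := by
    have hd0 : Tendsto (fun n : ℕ => ((n : ℝ) + 1)⁻¹) atTop (𝓝 0) := by
      have := tendsto_one_div_add_atTop_nhds_zero_nat (𝕜 := ℝ)
      simpa [one_div] using this
    have h1 : Tendsto (fun n : ℕ => t1 - ((n : ℝ) + 1)⁻¹) atTop (𝓝 t1) := by
      simpa using tendsto_const_nhds.sub hd0
    have h2 : Tendsto (fun n : ℕ => w - ((n : ℝ) + 1)⁻¹) atTop (𝓝 w) := by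
      simpa using tendsto_const_nhds.sub hd0
    have hseq : Tendsto (fun n : ℕ =>
        ENNReal.ofReal (t1 - ((n : ℝ) + 1)⁻¹) + M + ENNReal.ofReal (w - ((n : ℝ) + 1)⁻¹))
        atTop (𝓝 (ENNReal.ofReal t1 + M + ENNReal.ofReal w)) := by
      exact (((ENNReal.continuous_ofReal.tendsto _).comp h1).add tendsto_const_nhds).add
        ((ENNReal.continuous_ofReal.tendsto _).comp h2)
    exact le_of_tendsto hseq (Eventually.of_forall fun n => key _ (by positivity))
  have hGstar : G φstar ≤ ENNReal.ofReal t1 + M + ENNReal.ofReal w := by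
    rw [hG]
    simp only [hzstar]
    refine add_le_add (add_le_add le_rfl hCM) ?_
    apply ENNReal.ofReal_le_ofReal
    rw [hwdef]
    have hx2 : ‖φstar - φ₀‖ ^ 2 ≤ c ^ 2 := by nlinarith [hφnorm, norm_nonneg (φstar - φ₀)]
    exact mul_le_mul_of_nonneg_left hx2 hα.le
  exact hGstar.trans hfinal
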